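/- arXiv:1908.07493 — 4 statements merged into one kernel-verified Lean document; each statement's English description precedes it below -/
import Mathlib

section
/- Fix β ∈ (0, 1/2). For every ε > 0 there exists N such that for all n ≥ N the following holds. Let V be a finite set with |V| = n, let t and b be nonnegative integers with t + b = n and 0 ≤ t − b ≤ n^{1/2−β}, and let O ⊆ V with n^{1−β} ≤ |O| ≤ n/2. Then the number of subsets T ⊆ V with |T| = t and |T \ O| ≥ |(V \ T) \ O| is at most (1/2 + ε)·C(n, t), where C(n, t) is the binomial coefficient. Equivalently, for a uniformly random subset T of V of size t (with B = V \ T), the probability that |T \ O| ≥ |B \ O| is at most 1/2 + ε. -/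
lemma central_rel (r : ℕ) :
    (2*r+2).choose (r+1) * (r+1)^2 = (2*r+2)*(2*r+1)*((2*r).choose r) := by
  have h1 := Nat.add_one_mul_choose_eq (2*r+1) r
  have h2 := Nat.add_one_mul_choose_eq (2*r) r
  have h3 : (2*r+1).choose (r+1) = (2*r+1).choose r := by
    rw [← Nat.choose_symm (by omega : r+1 ≤ 2*r+1)]
    congr 1
    omega
  rw [h3] at h2
  nlinarith [h1, h2]

lemma L1even (r : ℕ) : (2*r+1) * ((2*r).choose r)^2 ≤ 4^(2*r) := by
  induction r with
  | zero => simp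
  | succ r ih =>
    set c := (2*r).choose r with hc
    have hrel := central_rel r
    have e : (2*(r+1)).choose (r+1) = (2*r+2).choose (r+1) := by
      rw [show 2*(r+1) = 2*r+2 by ring]
    have key : (2*(r+1)+1) * ((2*(r+1)).choose (r+1))^2 * ((r+1)^2)^2
        ≤ 4^(2*(r+1)) * ((r+1)^2)^2 := by
      rw [e]
      have hsq : ((2*r+2).choose (r+1))^2 * ((r+1)^2)^2
          = ((2*r+2)*(2*r+1))^2 * c^2 := by
        rw [← mul_pow, ← mul_pow, hrel]
      calc (2*(r+1)+1) * ((2*r+2).choose (r+1))^2 * ((r+1)^2)^2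
          = (2*r+3) * (((2*r+2).choose (r+1))^2 * ((r+1)^2)^2) := by ring
        _ = (2*r+3) * (((2*r+2)*(2*r+1))^2 * c^2) := by rw [hsq]
        _ = ((2*r+2)^2*(2*r+3)*(2*r+1)) * ((2*r+1)*c^2) := by ring
        _ ≤ ((2*r+2)^2*(2*r+3)*(2*r+1)) * 4^(2*r) := Nat.mul_le_mul_left _ ih
        _ ≤ ((2*r+2)^2*(2*r+2)^2) * 4^(2*r) := Nat.mul_le_mul_right _ (by nlinarith)
        _ = 4^(2*(r+1)) * ((r+1)^2)^2 := by ring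
    have hpos : 0 < ((r+1)^2)^2 := by positivity
    exact Nat.le_of_mul_le_mul_right key hpos

lemma L2even (r : ℕ) (hr : 1 ≤ r) : 4^(2*r) ≤ 4*r*((2*r).choose r)^2 := by
  induction r with
  | zero => omega
  | succ r ih =>
    rcases Nat.lt_or_ge r 1 with h1 | h1
    · have : r = 0 := by omega
      subst this
      decide
    · have ih' := ih h1
      set c := (2*r).choose r with hc
      have hrel := central_rel r
      have e : (2*(r+1)).choose (r+1) = (2*r+2).choose (r+1) := by
        rw [show 2*(r+1) = 2*r+2 by ring]
      have key : 4^(2*(r+1)) * (((r+1)^2)^2 * r)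
          ≤ 4*(r+1)*((2*(r+1)).choose (r+1))^2 * (((r+1)^2)^2 * r) := by
        rw [e]
        have hsq : ((2*r+2).choose (r+1))^2 * ((r+1)^2)^2
            = ((2*r+2)*(2*r+1))^2 * c^2 := by
          rw [← mul_pow, ← mul_pow, hrel]
        calc 4^(2*(r+1)) * (((r+1)^2)^2 * r)
            = (16*(r+1)^4*r) * 4^(2*r) := by ring
          _ ≤ (16*(r+1)^4*r) * (4*r*c^2) := Nat.mul_le_mul_left _ ih'
          _ = (16*r*(r+1)^3) * ((4*r*(r+1))*c^2) := by ring
          _ ≤ (16*r*(r+1)^3) * ((2*r+1)^2*c^2) :=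
              Nat.mul_le_mul_left _ (Nat.mul_le_mul_right _ (by nlinarith))
          _ = 4*(r+1)*r*(((2*r+2)*(2*r+1))^2 * c^2) := by ring
          _ = 4*(r+1)*r*(((2*r+2).choose (r+1))^2 * ((r+1)^2)^2) := by rw [hsq]
          _ = 4*(r+1)*((2*r+2).choose (r+1))^2 * (((r+1)^2)^2 * r) := by ring
      have hpos : 0 < ((r+1)^2)^2 * r := by positivity
      exact Nat.le_of_mul_le_mul_right key hpos

-- general versions
lemma L1 (k : ℕ) : (k+1) * (k.choose (k/2))^2 ≤ 4^k := by
  rcases Nat.even_or_odd k with ⟨r, hr⟩ | ⟨r, hr⟩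
  · subst hr
    have := L1even r
    rw [show r + r = 2*r by ring, show (2*r)/2 = r by omega]
    omega
  · subst hr
    have h2 : 2*((2*r+1).choose r) = (2*r+2).choose (r+1) := by
      have hp : (2*r+2).choose (r+1) = (2*r+1).choose r + (2*r+1).choose (r+1) :=
        Nat.choose_succ_succ (2*r+1) r
      have hs : (2*r+1).choose (r+1) = (2*r+1).choose r := by
        rw [← Nat.choose_symm (by omega : r+1 ≤ 2*r+1)]
        congr 1
        omega
      omega
    have key := L1even (r+1)
    rw [show 2*(r+1) = 2*r+2 by ring] at key
    rw [show (2*r+1)/2 = r by omega]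
    have hC : ((2*r+2).choose (r+1))^2 = 4*((2*r+1).choose r)^2 := by
      rw [← h2]; ring
    rw [hC] at key
    have hpow : (4:ℕ)^(2*r+2) = 4*4^(2*r+1) := by ring
    nlinarith [key, hpow, Nat.zero_le (((2*r+1).choose r)^2)]

lemma L2 (k : ℕ) (hk : 1 ≤ k) : 4^k ≤ 4*k*(k.choose (k/2))^2 := by
  rcases Nat.even_or_odd k with ⟨r, hr⟩ | ⟨r, hr⟩
  · subst hr
    have hr1 : 1 ≤ r := by omega
    have h := L2even r hr1
    rw [show r + r = 2*r by ring, show (2*r)/2 = r by omega]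
    nlinarith [h, Nat.zero_le (((2*r).choose r)^2)]
  · subst hr
    rw [show (2*r+1)/2 = r by omega]
    rcases Nat.lt_or_ge r 1 with h1 | h1
    · have : r = 0 := by omega
      subst this
      decide
    · have ih := L2even r h1
      set c := (2*r).choose r with hc
      -- C(2r+1, r)*(r+1) = (2r+1)*C(2r,r)
      have h2 := Nat.add_one_mul_choose_eq (2*r) r
      have hs : (2*r+1).choose (r+1) = (2*r+1).choose r := by
        rw [← Nat.choose_symm (by omega : r+1 ≤ 2*r+1)]
        congr 1
        omega
      rw [hs] at h2
      -- h2 : (2r+1)*c = (2r+1).choose r * (r+1)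
      have key : 4^(2*r+1) * ((r+1)^2*r) ≤ (4*(2*r+1)*((2*r+1).choose r)^2) * ((r+1)^2*r) := by
        calc 4^(2*r+1) * ((r+1)^2*r)
            = (4*r*(r+1)^2)*4^(2*r) := by ring
          _ ≤ (4*r*(r+1)^2)*(4*r*c^2) := Nat.mul_le_mul_left _ ih
          _ = (4*r*(4*r*(r+1)^2))*c^2 := by ring
          _ ≤ (4*r*(2*r+1)^3)*c^2 := by
              have h3 : 4*r*(r+1)^2 ≤ (2*r+1)^3 := by nlinarith
              exact Nat.mul_le_mul_right _ (by nlinarith [h3])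
          _ = (4*(2*r+1)*r)*((2*r+1)*c)^2 := by ring
          _ = (4*(2*r+1)*r)*((2*r+1).choose r*(r+1))^2 := by rw [h2]
          _ = (4*(2*r+1)*((2*r+1).choose r)^2) * ((r+1)^2*r) := by ring
      have hpos : 0 < (r+1)^2*r := by positivity
      exact Nat.le_of_mul_le_mul_right key hpos
open Finset

lemma fiber_card {V : Type} [Fintype V] [DecidableEq V] (O : Finset V) (t u : ℕ) (hu : u ≤ t) :
    ((Finset.univ.powersetCard t).filter (fun T : Finset V => (T \ O).card = u)).card
      = (Oᶜ.card).choose u * (O.card).choose (t - u) := by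
  rw [← Finset.card_powersetCard, ← Finset.card_powersetCard, ← Finset.card_product]
  apply Finset.card_bij' (i := fun T _ => (T \ O, T ∩ O))
    (j := fun P _ => P.1 ∪ P.2)
  · intro T hT
    simp only [Finset.mem_filter, Finset.mem_powersetCard] at hT
    obtain ⟨⟨_, hcard⟩, hfib⟩ := hT
    simp only [Finset.mem_product, Finset.mem_powersetCard]
    refine ⟨⟨fun x hx => ?_, hfib⟩, Finset.inter_subset_right, ?_⟩
    · simp only [Finset.mem_sdiff] at hx
      simp [hx.2]
    · have := Finset.card_sdiff_add_card_inter T O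
      omega
  · intro P hP
    simp only [Finset.mem_product, Finset.mem_powersetCard] at hP
    obtain ⟨⟨h1, hc1⟩, h2, hc2⟩ := hP
    have hdisj : Disjoint P.1 P.2 := by
      apply Finset.disjoint_left.mpr
      intro x hx1 hx2
      have := h1 hx1
      have := h2 hx2
      simp_all
    have hsd : (P.1 ∪ P.2) \ O = P.1 := by
      ext x
      simp only [Finset.mem_sdiff, Finset.mem_union]
      constructor
      · rintro ⟨hx1 | hx2, hxO⟩
        · exact hx1
        · exact absurd (h2 hx2) hxO
      · intro hx
        have := h1 hx
        simp only [Finset.mem_compl] at this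
        exact ⟨Or.inl hx, this⟩
    simp only [Finset.mem_filter, Finset.mem_powersetCard]
    refine ⟨⟨Finset.subset_univ _, ?_⟩, ?_⟩
    · rw [Finset.card_union_of_disjoint hdisj, hc1, hc2]
      omega
    · rw [hsd, hc1]
  · intro T hT
    exact Finset.sdiff_union_inter T O
  · intro P hP
    simp only [Finset.mem_product, Finset.mem_powersetCard] at hP
    obtain ⟨⟨h1, _⟩, h2, _⟩ := hP
    have hsd : (P.1 ∪ P.2) \ O = P.1 := by
      ext x
      simp only [Finset.mem_sdiff, Finset.mem_union]
      constructor
      · rintro ⟨hx1 | hx2, hxO⟩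
        · exact hx1
        · exact absurd (h2 hx2) hxO
      · intro hx
        have := h1 hx
        simp only [Finset.mem_compl] at this
        exact ⟨Or.inl hx, this⟩
    have hin : (P.1 ∪ P.2) ∩ O = P.2 := by
      ext x
      simp only [Finset.mem_inter, Finset.mem_union]
      constructor
      · rintro ⟨hx1 | hx2, hxO⟩
        · have := h1 hx1
          simp only [Finset.mem_compl] at this
          exact absurd hxO this
        · exact hx2
      · intro hx
        exact ⟨Or.inr hx, h2 hx⟩
    rw [hsd, hin]

lemma count_card {V : Type} [Fintype V] [DecidableEq V] (O : Finset V) (t : ℕ)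
    (p : ℕ → Prop) [DecidablePred p] :
    ((Finset.univ.powersetCard t).filter (fun T : Finset V => p (T \ O).card)).card
      = ∑ u ∈ Finset.range (t+1),
          if p u then (Oᶜ.card).choose u * (O.card).choose (t - u) else 0 := by
  rw [Finset.card_eq_sum_card_fiberwise
    (f := fun T : Finset V => (T \ O).card) (t := Finset.range (t+1))]
  · apply Finset.sum_congr rfl
    intro u hu
    rw [Finset.mem_range] at hu
    by_cases hp : p u
    · rw [if_pos hp, ← fiber_card O t u (by omega)]
      congr 1
      ext T
      simp only [Finset.mem_filter, Finset.mem_powersetCard, and_assoc]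
      constructor
      · rintro ⟨hs, hc, _, hfib⟩
        exact ⟨hs, hc, hfib⟩
      · rintro ⟨hs, hc, hfib⟩
        exact ⟨hs, hc, hfib ▸ hp, hfib⟩
    · rw [if_neg hp]
      rw [Finset.card_eq_zero]
      apply Finset.filter_eq_empty_iff.mpr
      rintro T hT
      simp only [Finset.mem_filter] at hT
      intro hfib
      exact hp (hfib ▸ hT.2)
  · intro T hT
    simp only [Finset.mem_coe, Finset.mem_filter, Finset.mem_powersetCard] at hT ⊢
    rw [Finset.mem_range]
    have h1 : (T \ O).card ≤ T.card := Finset.card_le_card (Finset.sdiff_subset)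
    omega

lemma choose_mono_half (s : ℕ) : ∀ x y : ℕ, x ≤ y → 2*y ≤ s → s.choose x ≤ s.choose y := by
  intro x y hxy
  induction y, hxy using Nat.le_induction with
  | base => intro; exact le_refl _
  | succ y hy ih =>
    intro h2
    refine le_trans (ih (by omega)) ?_
    apply Nat.choose_le_succ_of_lt_half_left
    omega

lemma choose_anti_half (s a c : ℕ) (hs : s ≤ 2*a) (hac : a ≤ c) : s.choose c ≤ s.choose a := by
  rcases Nat.lt_or_ge s c with h | h
  · rw [Nat.choose_eq_zero_of_lt h]; exact Nat.zero_le _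
  · have ha : a ≤ s := le_trans hac h
    rw [← Nat.choose_symm h, ← Nat.choose_symm ha]
    exact choose_mono_half s (s-c) (s-a) (by omega) (by omega)

lemma term_le (s m t b u : ℕ) (hb : b ≤ t) (hn : t + b = s + m)
    (hu : u ≤ t) (hu2 : s + 2*(t-b) < 2*u) (hu3 : u ≤ s) :
    s.choose u * m.choose (t-u) ≤ s.choose (s + (t-b) - u) * m.choose (t - (s + (t-b) - u)) := by
  set d := t - b with hd
  rcases Nat.lt_or_ge m (t-u) with hcase | hcase
  · rw [Nat.choose_eq_zero_of_lt hcase, mul_zero]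
    exact Nat.zero_le _
  · have hud : d < u := by omega
    have h4 : s.choose (s + d - u) = s.choose (u - d) := by
      have e1 : s + d - u ≤ s := by omega
      have := Nat.choose_symm e1
      rw [show s - (s + d - u) = u - d by omega] at this
      omega
    have h5 : m.choose (t - (s + d - u)) = m.choose (t - u) := by
      have e3 : t - (s + d - u) = u + m - t := by omega
      have e5 : u + m - t ≤ m := by omega
      have := Nat.choose_symm e5
      rw [show m - (u + m - t) = t - u by omega] at this
      rw [e3]
      omega
    rw [h4, h5]
    apply Nat.mul_le_mul_right
    exact choose_anti_half s (u - d) u (by omega) (by omega)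

lemma star (s m t b : ℕ) (hb : b ≤ t) (hn : t + b = s + m) :
    (∑ u ∈ range (t+1), if s ≤ 2*u then s.choose u * m.choose (t-u) else 0)
      ≤ (∑ u ∈ range (t+1), if 2*u < s then s.choose u * m.choose (t-u) else 0)
        + ((t-b)+1) * (s.choose (s/2) * m.choose (m/2)) := by
  set d := t - b with hd
  set g : ℕ → ℕ := fun u => s.choose u * m.choose (t-u) with hg
  set M := s.choose (s/2) * m.choose (m/2) with hM
  have hgM : ∀ u, g u ≤ M := fun u =>
    Nat.mul_le_mul (Nat.choose_le_middle u s) (Nat.choose_le_middle (t-u) m)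
  have hsplit : (∑ u ∈ range (t+1), if s ≤ 2*u then g u else 0)
      = (∑ u ∈ range (t+1), if s ≤ 2*u ∧ 2*u ≤ s + 2*d then g u else 0)
        + (∑ u ∈ range (t+1), if s + 2*d < 2*u then g u else 0) := by
    rw [← Finset.sum_add_distrib]
    apply Finset.sum_congr rfl
    intro u _
    by_cases h1 : s ≤ 2*u
    · by_cases h2 : 2*u ≤ s + 2*d
      · rw [if_pos h1, if_pos ⟨h1, h2⟩, if_neg (by omega)]
        omega
      · rw [if_pos h1, if_neg (by simp [h2]), if_pos (by omega)]
        omega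
    · rw [if_neg h1, if_neg (by simp; omega), if_neg (by omega)]
  rw [hsplit]
  have hwin : (∑ u ∈ range (t+1), if s ≤ 2*u ∧ 2*u ≤ s + 2*d then g u else 0) ≤ (d+1) * M := by
    calc (∑ u ∈ range (t+1), if s ≤ 2*u ∧ 2*u ≤ s + 2*d then g u else 0)
        ≤ (∑ u ∈ range (t+1), if s ≤ 2*u ∧ 2*u ≤ s + 2*d then M else 0) := by
          apply Finset.sum_le_sum
          intro u _
          split_ifs
          · exact hgM u
          · exact le_refl 0
      _ = ((range (t+1)).filter (fun u => s ≤ 2*u ∧ 2*u ≤ s + 2*d)).card * M := by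
          rw [← Finset.sum_filter, Finset.sum_const, smul_eq_mul]
      _ ≤ (d+1) * M := by
          apply Nat.mul_le_mul_right
          calc ((range (t+1)).filter (fun u => s ≤ 2*u ∧ 2*u ≤ s + 2*d)).card
              ≤ (Finset.Icc (s/2) (s/2 + d)).card := by
                apply Finset.card_le_card
                intro u hu
                simp only [Finset.mem_filter, Finset.mem_range] at hu
                rw [Finset.mem_Icc]
                omega
            _ = d + 1 := by rw [Nat.card_Icc]; omega
  have htail : (∑ u ∈ range (t+1), if s + 2*d < 2*u then g u else 0)
      ≤ (∑ u ∈ range (t+1), if 2*u < s then g u else 0) := by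
    rw [← Finset.sum_filter, ← Finset.sum_filter]
    set A := (range (t+1)).filter (fun u => s + 2*d < 2*u) with hA
    set A' := A.filter (fun u => u ≤ s) with hA'
    have hAA : ∑ u ∈ A, g u = ∑ u ∈ A', g u := by
      symm
      apply Finset.sum_subset (Finset.filter_subset _ _)
      intro u _ hu'
      have hus : ¬ u ≤ s := by
        intro h
        exact hu' (Finset.mem_filter.mpr ⟨by assumption, h⟩)
      rw [hg]
      simp only
      rw [Nat.choose_eq_zero_of_lt (by omega), zero_mul]
    rw [hAA]
    have hmem : ∀ u ∈ A', u ≤ t ∧ s + 2*d < 2*u ∧ u ≤ s := by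
      intro u hu
      simp only [hA', hA, Finset.mem_filter, Finset.mem_range] at hu
      omega
    calc ∑ u ∈ A', g u
        ≤ ∑ u ∈ A', g (s + d - u) := by
          apply Finset.sum_le_sum
          intro u hu
          obtain ⟨h1, h2, h3⟩ := hmem u hu
          exact term_le s m t b u hb hn h1 h2 h3
      _ = ∑ v ∈ A'.image (fun u => s + d - u), g v := by
          rw [Finset.sum_image]
          intro x hx y hy hxy
          obtain ⟨_, _, hx3⟩ := hmem x hx
          obtain ⟨_, _, hy3⟩ := hmem y hy
          simp only at hxy
          omega
      _ ≤ ∑ v ∈ (range (t+1)).filter (fun u => 2*u < s), g v := by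
          apply Finset.sum_le_sum_of_subset
          intro v hv
          rw [Finset.mem_image] at hv
          obtain ⟨u, hu, huv⟩ := hv
          obtain ⟨h1, h2, h3⟩ := hmem u hu
          simp only [Finset.mem_filter, Finset.mem_range]
          omega
  have e1 : (∑ u ∈ range (t+1), if s ≤ 2*u then s.choose u * m.choose (t-u) else 0)
      = (∑ u ∈ range (t+1), if s ≤ 2*u then g u else 0) := rfl
  have e2 : (∑ u ∈ range (t+1), if 2*u < s then s.choose u * m.choose (t-u) else 0)
      = (∑ u ∈ range (t+1), if 2*u < s then g u else 0) := rfl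
  have e3 : ((t-b)+1) * (s.choose (s/2) * m.choose (m/2)) = (d+1) * M := rfl
  omega

lemma upper_real (k : ℕ) : (k.choose (k/2) : ℝ) ≤ 2^k / Real.sqrt (k+1) := by
  have h : ((k:ℝ)+1) * (k.choose (k/2):ℝ)^2 ≤ 4^k := by exact_mod_cast L1 k
  have hpos : (0:ℝ) < (k:ℝ)+1 := by positivity
  have h2 : ((k.choose (k/2):ℝ))^2 ≤ 4^k/((k:ℝ)+1) := (le_div_iff₀ hpos).mpr (by linarith)
  have h4 : (4:ℝ)^k = (2^k)^2 := by rw [show (4:ℝ) = 2^2 by norm_num, ← pow_mul, ← pow_mul, mul_comm]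
  calc (k.choose (k/2) : ℝ) = Real.sqrt ((k.choose (k/2):ℝ)^2) :=
        (Real.sqrt_sq (by positivity)).symm
    _ ≤ Real.sqrt (4^k/((k:ℝ)+1)) := Real.sqrt_le_sqrt h2
    _ = Real.sqrt ((4:ℝ)^k) / Real.sqrt ((k:ℝ)+1) := Real.sqrt_div (by positivity) _
    _ = 2^k / Real.sqrt ((k:ℝ)+1) := by rw [h4, Real.sqrt_sq (by positivity)]

lemma lower_real (k : ℕ) (hk : 1 ≤ k) : 2^k / (2 * Real.sqrt k) ≤ (k.choose (k/2) : ℝ) := by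
  have h : (4:ℝ)^k ≤ 4*(k:ℝ)*(k.choose (k/2):ℝ)^2 := by exact_mod_cast L2 k hk
  have hkpos : (0:ℝ) < (k:ℝ) := by exact_mod_cast hk
  have h2 : (4:ℝ)^k/(4*(k:ℝ)) ≤ ((k.choose (k/2):ℝ))^2 := (div_le_iff₀ (by positivity)).mpr (by linarith)
  have h4 : (4:ℝ)^k = (2^k)^2 := by rw [show (4:ℝ) = 2^2 by norm_num, ← pow_mul, ← pow_mul, mul_comm]
  have h5 : Real.sqrt ((4:ℝ)*k) = 2 * Real.sqrt k := by
    rw [show (4:ℝ)*k = 2^2*k by norm_num, Real.sqrt_mul (by positivity), Real.sqrt_sq (by norm_num)]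
  calc 2^k / (2*Real.sqrt k) = Real.sqrt ((4:ℝ)^k) / Real.sqrt (4*(k:ℝ)) := by
        rw [h4, Real.sqrt_sq (by positivity), h5]
    _ = Real.sqrt ((4:ℝ)^k/(4*(k:ℝ))) := (Real.sqrt_div (by positivity) _).symm
    _ ≤ Real.sqrt (((k.choose (k/2):ℝ))^2) := Real.sqrt_le_sqrt h2
    _ = (k.choose (k/2):ℝ) := Real.sqrt_sq (by positivity)

lemma ratio_lemma (n t b : ℕ) (htb : t + b = n) (hbt : b ≤ t) :
    ∀ i, n/2 + i ≤ t → (n.choose (n/2)) * b^i ≤ (n.choose (n/2 + i)) * t^i := by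
  intro i
  induction i with
  | zero => simp
  | succ i ih =>
    intro hi
    have ih' := ih (by omega)
    set k := n/2 + i with hk
    have hrec : n.choose (k+1) * (k+1) = n.choose k * (n - k) := Nat.choose_succ_right_eq n k
    have h1 : b + 1 ≤ n - k := by omega
    have key : n.choose (n/2) * b^(i+1) * (k+1) ≤ n.choose (k+1) * t^(i+1) * (k+1) := by
      calc n.choose (n/2) * b^(i+1) * (k+1)
          = (n.choose (n/2) * b^i) * (b*(k+1)) := by ring
        _ ≤ (n.choose k * t^i) * (b*(k+1)) := Nat.mul_le_mul_right _ ih'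
        _ ≤ (n.choose k * t^i) * ((n-k)*t) := by
            apply Nat.mul_le_mul_left
            calc b*(k+1) ≤ b*t := Nat.mul_le_mul_left _ (by omega)
              _ ≤ (b+1)*t := Nat.mul_le_mul_right _ (by omega)
              _ ≤ (n-k)*t := Nat.mul_le_mul_right _ h1
        _ = (n.choose k * (n-k)) * t^(i+1) := by ring
        _ = (n.choose (k+1) * (k+1)) * t^(i+1) := by rw [hrec]
        _ = n.choose (k+1) * t^(i+1) * (k+1) := by ring
    have := Nat.le_of_mul_le_mul_right key (by omega : 0 < k+1)
    rw [show n/2 + (i+1) = k+1 by omega]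
    exact this

lemma half_le (n t b : ℕ) (htb : t + b = n) (hbt : b ≤ t) (hb : 0 < b)
    (hsmall : 2*(t - n/2)*(t - b) ≤ t) : (n.choose (n/2) : ℝ) ≤ 2 * (n.choose t) := by
  set d := t - b with hd
  set e := t - n/2 with he'
  have he : n/2 + e = t := by omega
  have hr := ratio_lemma n t b htb hbt e (by omega)
  rw [he] at hr
  have hrR : (n.choose (n/2) : ℝ) * (b:ℝ)^e ≤ (n.choose t : ℝ) * (t:ℝ)^e := by exact_mod_cast hr
  have htpos : (0:ℝ) < t := by exact_mod_cast Nat.lt_of_lt_of_le hb hbt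
  have hbpos : (0:ℝ) < b := by exact_mod_cast hb
  have hdt : (d:ℕ) ≤ t := by omega
  have hbR : (b:ℝ) = (t:ℝ) - (d:ℝ) := by
    rw [hd, Nat.cast_sub hbt]
    ring
  have hber := one_add_mul_le_pow (a := -((d:ℝ)/t)) (by
    have h0 : (0:ℝ) ≤ (d:ℝ)/t := by positivity
    have h1 : (d:ℝ)/t ≤ 1 := by
      rw [div_le_one htpos]
      exact_mod_cast hdt
    linarith) e
  have hsm : (e:ℝ)*(d:ℝ) ≤ (t:ℝ)/2 := by
    have : ((2*e*d : ℕ):ℝ) ≤ (t:ℝ) := by exact_mod_cast hsmall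
    push_cast at this
    linarith
  have h1a : (1:ℝ)/2 ≤ 1 + (e:ℝ)*(-((d:ℝ)/t)) := by
    have : (e:ℝ)*((d:ℝ)/t) ≤ 1/2 := by
      rw [mul_div_assoc'] at *
      rw [div_le_div_iff₀ htpos (by norm_num : (0:ℝ) < 2)] at *
      linarith [hsm]
    linarith
  have hhalf : (1:ℝ)/2 ≤ ((b:ℝ)/t)^e := by
    have heq : (1:ℝ) + (-((d:ℝ)/t)) = (b:ℝ)/t := by
      rw [hbR]
      field_simp
      ring
    calc (1:ℝ)/2 ≤ 1 + (e:ℝ)*(-((d:ℝ)/t)) := h1a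
      _ ≤ (1 + (-((d:ℝ)/t)))^e := hber
      _ = ((b:ℝ)/t)^e := by rw [heq]
  have hte : (t:ℝ)^e ≤ 2*(b:ℝ)^e := by
    rw [div_pow] at hhalf
    have htep : (0:ℝ) < (t:ℝ)^e := by positivity
    rw [le_div_iff₀ htep] at hhalf
    linarith
  have hfin : (n.choose (n/2) : ℝ) * (b:ℝ)^e ≤ (2 * (n.choose t : ℝ)) * (b:ℝ)^e := by
    calc (n.choose (n/2) : ℝ) * (b:ℝ)^e ≤ (n.choose t : ℝ) * (t:ℝ)^e := hrR
      _ ≤ (n.choose t : ℝ) * (2*(b:ℝ)^e) := by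
          apply mul_le_mul_of_nonneg_left hte (by positivity)
      _ = (2 * (n.choose t : ℝ)) * (b:ℝ)^e := by ring
  exact le_of_mul_le_mul_right hfin (by positivity)

open Filter

/-- Fix `β ∈ (0, 1/2)`.  For every `ε > 0` there is `N` such that for all
`n ≥ N`: if `|V| = n`, `t + b = n`, `0 ≤ t - b ≤ n^(1/2-β)`, and `O ⊆ V` with
`n^(1-β) ≤ |O| ≤ n/2`, then the number of subsets `T ⊆ V` with `|T| = t` and
`|T \ O| ≥ |(V \ T) \ O|` is at most `(1/2 + ε) · C(n, t)`. -/
theorem statement1 (β : ℝ) (hβ0 : 0 < β) (hβ1 : β < 1 / 2) :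
    ∀ ε : ℝ, 0 < ε → ∃ N : ℕ, ∀ n : ℕ, N ≤ n →
      ∀ (V : Type) [Fintype V] [DecidableEq V], Fintype.card V = n →
        ∀ t b : ℕ, t + b = n → b ≤ t → (t : ℝ) - b ≤ (n : ℝ) ^ ((1 : ℝ) / 2 - β) →
          ∀ O : Finset V, (n : ℝ) ^ (1 - β) ≤ (O.card : ℝ) → 2 * O.card ≤ n →
            (((Finset.univ.powersetCard t).filter
                (fun T : Finset V => ((Finset.univ \ T) \ O).card ≤ (T \ O).card)).card : ℝ)
              ≤ (1 / 2 + ε) * (n.choose t) := by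
  intro ε hε
  have tendA : Tendsto (fun n : ℕ => (n:ℝ)^(2*β)) atTop atTop :=
    (tendsto_rpow_atTop (by linarith)).comp tendsto_natCast_atTop_atTop
  have tendB : Tendsto (fun n : ℕ => (n:ℝ)^((1:ℝ)/2+β)) atTop atTop :=
    (tendsto_rpow_atTop (by linarith)).comp tendsto_natCast_atTop_atTop
  have tendC : Tendsto (fun n : ℕ => (n:ℝ)^(β/2)) atTop atTop :=
    (tendsto_rpow_atTop (by linarith)).comp tendsto_natCast_atTop_atTop
  obtain ⟨N1, hN1⟩ := eventually_atTop.mp (tendA.eventually_ge_atTop 8)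
  obtain ⟨N2, hN2⟩ := eventually_atTop.mp (tendB.eventually_ge_atTop 8)
  obtain ⟨N3, hN3⟩ := eventually_atTop.mp (tendC.eventually_ge_atTop (8/ε))
  refine ⟨max (max N1 N2) (max N3 4), ?_⟩
  intro n hn V _ _ hV t b htb hbt hdR O hOlow hOhigh
  have hnN1 : N1 ≤ n := le_trans (le_trans (le_max_left _ _) (le_max_left _ _)) hn
  have hnN2 : N2 ≤ n := le_trans (le_trans (le_max_right _ _) (le_max_left _ _)) hn
  have hnN3 : N3 ≤ n := le_trans (le_trans (le_max_left _ _) (le_max_right _ _)) hn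
  have hn4 : 4 ≤ n := le_trans (le_trans (le_max_right _ _) (le_max_right _ _)) hn
  have hA := hN1 n hnN1
  have hB := hN2 n hnN2
  have hC := hN3 n hnN3
  -- notation
  set m := O.card with hm
  set s := Oᶜ.card with hsdef
  set d := t - b with hd
  have hsm : s + m = n := by
    rw [hsdef, hm, Finset.card_compl, hV]
    have h1 : O.card ≤ Fintype.card V := Finset.card_le_univ O
    rw [hV] at h1
    omega
  have h2t : 2*t = n + d := by omega
  -- real facts about n
  have hn0 : (0:ℝ) < n := by
    have : (4:ℝ) ≤ (n:ℝ) := by exact_mod_cast hn4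
    linarith only [this]
  have hn1 : (1:ℝ) ≤ (n:ℝ) := by
    have : (4:ℝ) ≤ (n:ℝ) := by exact_mod_cast hn4
    linarith only [this]
  set X := (n:ℝ)^((1:ℝ)/2 - β) with hX
  set P := (n:ℝ)^(β/2) with hP
  set Q := (n:ℝ)^((1-β)/2) with hQ
  set S := Real.sqrt (n:ℝ) with hS
  have hXpos : 0 < X := Real.rpow_pos_of_pos hn0 _
  have hPpos : 0 < P := Real.rpow_pos_of_pos hn0 _
  have hQpos : 0 < Q := Real.rpow_pos_of_pos hn0 _
  have hSpos : 0 < S := Real.sqrt_pos.mpr hn0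
  have hX1 : (1:ℝ) ≤ X := by
    calc (1:ℝ) = (1:ℝ)^((1:ℝ)/2 - β) := (Real.one_rpow _).symm
      _ ≤ X := Real.rpow_le_rpow (by norm_num) hn1 (by linarith)
  have hdR' : (d:ℝ) ≤ X := by
    have : (d:ℝ) = (t:ℝ) - (b:ℝ) := by
      rw [hd, Nat.cast_sub hbt]
    rw [this]
    exact hdR
  have hQXP : Q = X * P := by
    rw [hQ, hX, hP, ← Real.rpow_add hn0]
    congr 1
    ring
  -- d is small: X^2 = n^(1-2β) ≤ n/8, X ≤ n/8
  have hX2 : X^2 = (n:ℝ)^(1-2*β) := by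
    rw [hX, ← Real.rpow_natCast ((n:ℝ)^((1:ℝ)/2-β)) 2, ← Real.rpow_mul (le_of_lt hn0)]
    congr 1
    push_cast
    ring
  have hX2n : X^2 ≤ (n:ℝ)/8 := by
    have h1 : (n:ℝ)^(1-2*β) * (n:ℝ)^(2*β) = (n:ℝ) := by
      rw [← Real.rpow_add hn0]
      norm_num
    have h2 : X^2 * 8 ≤ X^2 * (n:ℝ)^(2*β) := by
      apply mul_le_mul_of_nonneg_left hA (by positivity)
    rw [hX2] at *
    have hy := Real.rpow_pos_of_pos hn0 (1-2*β)
    linarith only [h1, h2, hy]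
  have hXn : X ≤ (n:ℝ)/8 := by
    have h1 : X * (n:ℝ)^((1:ℝ)/2+β) = (n:ℝ) := by
      rw [hX, ← Real.rpow_add hn0]
      norm_num
    have h2 : X * 8 ≤ X * (n:ℝ)^((1:ℝ)/2+β) := by
      apply mul_le_mul_of_nonneg_left hB (le_of_lt (lt_of_lt_of_le zero_lt_one hX1))
    linarith only [h1, h2]
  have htn : (n:ℝ) ≤ 2*(t:ℝ) := by
    have : ((2*t : ℕ):ℝ) = (n:ℝ) + (d:ℝ) := by exact_mod_cast h2t
    push_cast at this
    have hd0 : (0:ℝ) ≤ (d:ℝ) := Nat.cast_nonneg d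
    linarith only [this, hd0]
  have hsmall_real : 2*((d:ℝ)+1)*(d:ℝ) ≤ (t:ℝ) := by
    have hd0 : (0:ℝ) ≤ (d:ℝ) := Nat.cast_nonneg d
    have hd2 : (d:ℝ)^2 ≤ X^2 := by nlinarith only [hdR', hd0, hXpos]
    have hexp : 2*((d:ℝ)+1)*(d:ℝ) = 2*(d:ℝ)^2 + 2*(d:ℝ) := by ring
    rw [hexp]
    linarith only [hd2, hX2n, hXn, htn, hdR']
  have hsmall_nat : 2*(d+1)*d ≤ t := by
    have : ((2*(d+1)*d : ℕ):ℝ) ≤ (t:ℝ) := by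
      push_cast
      linarith only [hsmall_real]
    exact_mod_cast this
  have hb0 : 0 < b := by
    have hdn : 2*(d:ℝ) ≤ (n:ℝ) := by linarith only [hdR', hXn, hn0]
    have hdn' : 2*d ≤ n := by exact_mod_cast hdn
    omega
  -- Counting reduction
  have hfilter_eq : ((Finset.univ.powersetCard t).filter
        (fun T : Finset V => ((Finset.univ \ T) \ O).card ≤ (T \ O).card))
      = (Finset.univ.powersetCard t).filter
        (fun T : Finset V => (fun u => s ≤ 2*u) ((T \ O).card)) := by
    apply Finset.filter_congr
    intro T _
    have h1 : (Finset.univ \ T) \ O = Oᶜ \ T := by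
      ext x
      simp only [Finset.mem_sdiff, Finset.mem_compl, Finset.mem_univ, true_and]
      tauto
    have h2 : Oᶜ ∩ T = T \ O := by
      ext x
      simp only [Finset.mem_inter, Finset.mem_compl, Finset.mem_sdiff]
      tauto
    have h3 := Finset.card_sdiff_add_card_inter Oᶜ T
    rw [h2, ← hsdef] at h3
    rw [h1]
    simp only
    omega
  have hcount := count_card O t (fun u => s ≤ 2*u)
  have htrue := count_card O t (fun _ => True)
  rw [← hsdef, ← hm] at hcount htrue
  simp only [if_true] at htrue
  rw [Finset.filter_true_of_mem (fun _ _ => trivial)] at htrue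
  rw [Finset.card_powersetCard, Finset.card_univ, hV] at htrue
  -- htrue : n.choose t = ∑ u ∈ range (t+1), s.choose u * m.choose (t-u)
  have hsplit : (∑ u ∈ Finset.range (t+1), s.choose u * m.choose (t-u))
      = (∑ u ∈ Finset.range (t+1), if s ≤ 2*u then s.choose u * m.choose (t-u) else 0)
        + (∑ u ∈ Finset.range (t+1), if 2*u < s then s.choose u * m.choose (t-u) else 0) := by
    rw [← Finset.sum_add_distrib]
    apply Finset.sum_congr rfl
    intro u _
    by_cases h : s ≤ 2*u
    · rw [if_pos h, if_neg (by omega)]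
      omega
    · rw [if_neg h, if_pos (by omega)]
      omega
  have hstar := star s m t b hbt (by omega)
  rw [← hd] at hstar
  set K := (((Finset.univ.powersetCard t).filter
        (fun T : Finset V => ((Finset.univ \ T) \ O).card ≤ (T \ O).card)).card) with hK
  clear_value K
  have hKeq : K = (((Finset.univ.powersetCard t).filter
        (fun T : Finset V => (fun u => s ≤ 2*u) ((T \ O).card))).card) := by
    rw [hK, hfilter_eq]
  have hkey_nat : 2 * K ≤ n.choose t + (d+1)*(s.choose (s/2) * m.choose (m/2)) := by
    rw [hKeq, hcount]
    omega
  -- go to the reals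
  set Cs : ℝ := (s.choose (s/2) : ℝ) with hCs
  set Cm : ℝ := (m.choose (m/2) : ℝ) with hCm
  set Ct : ℝ := (n.choose t : ℝ) with hCt
  have hkeyR : (K : ℝ) ≤ Ct/2 + ((d:ℝ)+1)*(Cs*Cm)/2 := by
    have hcast := (Nat.cast_le (α := ℝ)).mpr hkey_nat
    push_cast at hcast
    rw [hCt, hCs, hCm]
    linarith only [hcast]
  -- M upper bound
  have hsub1 : Real.sqrt ((n:ℝ)/2) ≤ Real.sqrt ((s:ℝ)+1) := by
    apply Real.sqrt_le_sqrt
    have h1 : (s:ℝ) + (m:ℝ) = (n:ℝ) := by exact_mod_cast hsm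
    have h2 : 2*(m:ℝ) ≤ (n:ℝ) := by exact_mod_cast hOhigh
    linarith only [h1, h2]
  have hQs : Real.sqrt ((n:ℝ)^(1-β)) = Q := by
    rw [hQ, Real.sqrt_eq_rpow, ← Real.rpow_mul (le_of_lt hn0)]
    congr 1
    ring
  have hsub2 : Q ≤ Real.sqrt ((m:ℝ)+1) := by
    rw [← hQs]
    apply Real.sqrt_le_sqrt
    linarith only [hOlow]
  have hsqrt2 : Real.sqrt ((n:ℝ)/2) = S / Real.sqrt 2 := by
    rw [hS]
    exact Real.sqrt_div (by positivity) 2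
  have hs2pos : (0:ℝ) < Real.sqrt 2 := Real.sqrt_pos.mpr (by norm_num)
  have hM2 : Cs * Cm ≤ 2^n * Real.sqrt 2 / (S * Q) := by
    have u1 := upper_real s
    have u2 := upper_real m
    have hCsnn : (0:ℝ) ≤ Cs := by positivity
    have hCmnn : (0:ℝ) ≤ Cm := by positivity
    have step : Cs * Cm ≤ (2^s / Real.sqrt ((s:ℝ)+1)) * (2^m / Real.sqrt ((m:ℝ)+1)) := by
      apply mul_le_mul u1 u2 hCmnn (by positivity)
    have hpow : (2:ℝ)^s * 2^m = 2^n := by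
      rw [← pow_add, hsm]
    have e1 : (2^s / Real.sqrt ((s:ℝ)+1)) * (2^m / Real.sqrt ((m:ℝ)+1))
        = 2^n / (Real.sqrt ((s:ℝ)+1) * Real.sqrt ((m:ℝ)+1)) := by
      rw [div_mul_div_comm, hpow]
    have hden : Real.sqrt ((n:ℝ)/2) * Q ≤ Real.sqrt ((s:ℝ)+1) * Real.sqrt ((m:ℝ)+1) := by
      apply mul_le_mul hsub1 hsub2 (le_of_lt hQpos) (Real.sqrt_nonneg _)
    have hdenpos : (0:ℝ) < Real.sqrt ((n:ℝ)/2) * Q := by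
      apply mul_pos (Real.sqrt_pos.mpr (by linarith only [hn0])) hQpos
    have step2 : (2:ℝ)^n / (Real.sqrt ((s:ℝ)+1) * Real.sqrt ((m:ℝ)+1))
        ≤ 2^n / (Real.sqrt ((n:ℝ)/2) * Q) :=
      div_le_div_of_nonneg_left (by positivity) hdenpos hden
    have e2 : (2:ℝ)^n / (Real.sqrt ((n:ℝ)/2) * Q) = 2^n * Real.sqrt 2 / (S * Q) := by
      rw [hsqrt2]
      field_simp
    calc Cs * Cm ≤ (2^s / Real.sqrt ((s:ℝ)+1)) * (2^m / Real.sqrt ((m:ℝ)+1)) := step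
      _ = 2^n / (Real.sqrt ((s:ℝ)+1) * Real.sqrt ((m:ℝ)+1)) := e1
      _ ≤ 2^n / (Real.sqrt ((n:ℝ)/2) * Q) := step2
      _ = 2^n * Real.sqrt 2 / (S * Q) := e2
  -- lower bound on Ct
  have hsmall_nat' : 2*(t - n/2)*(t - b) ≤ t := by
    calc 2*(t - n/2)*(t - b) ≤ 2*(d+1)*d := by
          apply Nat.mul_le_mul_right
          omega
      _ ≤ t := hsmall_nat
  have hhalf := half_le n t b htb hbt hb0 hsmall_nat'
  have hCn2 := lower_real n (by omega)
  have hClow : (2:ℝ)^n/(4*S) ≤ Ct := by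
    have e3 : (2:ℝ)^n/(4*S) = ((2:ℝ)^n/(2*S))/2 := by
      field_simp
      ring
    rw [e3, hCt]
    rw [hS]
    linarith only [hCn2, hhalf]
  -- final combination
  have hd1 : (d:ℝ)+1 ≤ 2*X := by linarith only [hdR', hX1]
  have hPa : 8 ≤ ε * P := by
    have := (div_le_iff₀ hε).mp hC
    linarith only [this]
  have hsqrt2le : Real.sqrt 2 ≤ 2 := by
    nlinarith only [Real.sq_sqrt (by norm_num : (0:ℝ) ≤ 2), Real.sqrt_nonneg 2]
  have hcomb : ((d:ℝ)+1) * (Cs*Cm) ≤ 2*ε*Ct := by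
    have step1 : ((d:ℝ)+1)*(Cs*Cm) ≤ (2*X)*(2^n*Real.sqrt 2/(S*Q)) := by
      apply mul_le_mul hd1 hM2 (by positivity) (by positivity)
    have e1 : (2*X)*((2:ℝ)^n*Real.sqrt 2/(S*(X*P))) = (2*Real.sqrt 2/P)*(2^n/S) := by
      field_simp
    have e2 : 2*ε*((2:ℝ)^n/(4*S)) = (ε/2)*(2^n/S) := by
      field_simp
      ring
    have hfrac : 2*Real.sqrt 2/P ≤ ε/2 := by
      rw [div_le_iff₀ hPpos]
      calc 2*Real.sqrt 2 ≤ 4 := by linarith only [hsqrt2le]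
        _ ≤ ε/2*P := by linarith only [hPa]
    have step2 : (2*X)*((2:ℝ)^n*Real.sqrt 2/(S*Q)) ≤ 2*ε*((2:ℝ)^n/(4*S)) := by
      rw [hQXP, e1, e2]
      apply mul_le_mul_of_nonneg_right hfrac (by positivity)
    have step3 : 2*ε*((2:ℝ)^n/(4*S)) ≤ 2*ε*Ct := by
      apply mul_le_mul_of_nonneg_left hClow (by positivity)
    linarith only [step1, step2, step3]
  calc (K : ℝ)
      ≤ Ct/2 + ((d:ℝ)+1)*(Cs*Cm)/2 := hkeyR
    _ ≤ Ct/2 + (2*ε*Ct)/2 := by linarith only [hcomb]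
    _ = (1/2 + ε) * Ct := by ring
end

section
/- Fix β ∈ (0, 1/2). For every ε > 0 there exists N such that for all n ≥ N the following holds. Let S be a finite set with |S| = 2b for some positive integer b with 2b ≤ n, and let K ⊆ S with |K| ≥ n^{1−β}/2 and |S \ K| ≥ n/3. Then the number of subsets A ⊆ S with |A| = b and | |A ∩ K| − |K \ A| | ≤ n^{1/2−β} is at most ε·C(2b, b), where C(2b, b) is the binomial coefficient. Equivalently, for a uniformly random subset A of S of size b, the probability that | |A ∩ K| − |K \ A| | ≤ n^{1/2−β} is at most ε. -/
open Finset

private lemma lemA' (t : ℕ) : (3*t+1) * (Nat.centralBinom t)^2 ≤ 16^t := by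
  induction t with
  | zero => simp [Nat.centralBinom]
  | succ t ih =>
    have key := Nat.succ_mul_centralBinom_succ t
    have hpos : 0 < (t+1)^2 := by positivity
    refine Nat.le_of_mul_le_mul_left ?_ hpos
    calc (t+1)^2 * ((3*(t+1)+1) * (Nat.centralBinom (t+1))^2)
        = (3*t+4) * ((t+1) * Nat.centralBinom (t+1))^2 := by ring
      _ = (3*t+4) * (2*(2*t+1) * Nat.centralBinom t)^2 := by rw [key]
      _ = ((3*t+4)*(4*(2*t+1)^2)) * (Nat.centralBinom t)^2 := by ring
      _ ≤ (16*(t+1)^2) * ((3*t+1) * (Nat.centralBinom t)^2) := by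
          rw [show (16*(t+1)^2) * ((3*t+1) * (Nat.centralBinom t)^2)
              = ((16*(t+1)^2)*(3*t+1)) * (Nat.centralBinom t)^2 by ring]
          exact Nat.mul_le_mul_right _ (by nlinarith)
      _ ≤ (16*(t+1)^2) * 16^t := Nat.mul_le_mul_left _ ih
      _ = (t+1)^2 * 16^(t+1) := by ring


private lemma lemC' (b : ℕ) (hb : 1 ≤ b) : 16^b ≤ 4*b*(Nat.centralBinom b)^2 := by
  induction b with
  | zero => omega
  | succ b ih =>
    rcases Nat.eq_or_lt_of_le hb with h | h
    · simp [← h, Nat.centralBinom]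
    · have hb1 : 1 ≤ b := by omega
      have ih := ih hb1
      have key := Nat.succ_mul_centralBinom_succ b
      have hpos : 0 < (b+1) := by omega
      refine Nat.le_of_mul_le_mul_left ?_ hpos
      calc (b+1) * 16^(b+1) = 16 * (b+1) * 16^b := by ring
        _ ≤ 16 * (b+1) * (4*b*(Nat.centralBinom b)^2) := Nat.mul_le_mul_left _ ih
        _ = (16*b*(b+1)) * (4 * (Nat.centralBinom b)^2) := by ring
        _ ≤ (4*(2*b+1)^2) * (4 * (Nat.centralBinom b)^2) := by
            exact Nat.mul_le_mul_right _ (by nlinarith)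
        _ = 4 * (2*(2*b+1) * Nat.centralBinom b)^2 := by ring
        _ = 4 * ((b+1) * Nat.centralBinom (b+1))^2 := by rw [key]
        _ = (b+1) * (4*(b+1)*(Nat.centralBinom (b+1))^2) := by ring


private lemma lemB' (k : ℕ) : k * (k.choose (k/2))^2 ≤ 4^k := by
  rcases Nat.even_or_odd k with ⟨t, ht⟩ | ⟨t, ht⟩
  · subst ht
    have h2 : (t+t)/2 = t := by omega
    rw [h2]
    have : (t+t).choose t = Nat.centralBinom t := by
      rw [Nat.centralBinom]; congr 1; omega
    rw [this]
    calc (t+t) * (Nat.centralBinom t)^2 ≤ (3*t+1) * (Nat.centralBinom t)^2 :=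
          Nat.mul_le_mul_right _ (by omega)
      _ ≤ 16^t := lemA' t
      _ ≤ 4^(t+t) := by rw [show t+t = 2*t by ring, Nat.pow_mul]
  · subst ht
    have h2 : (2*t+1)/2 = t := by omega
    rw [h2]
    have hsymm : (2*t+1).choose (t+1) = (2*t+1).choose t := by
      have := Nat.choose_symm (show t+1 ≤ 2*t+1 by omega)
      rw [show 2*t+1-(t+1) = t by omega] at this; exact this.symm
    have hcb : Nat.centralBinom (t+1) = 2 * (2*t+1).choose t := by
      rw [Nat.centralBinom, show 2*(t+1) = (2*t+1)+1 by ring, Nat.choose_succ_succ, hsymm]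
      ring
    refine Nat.le_of_mul_le_mul_left ?_ (show 0 < 4 by norm_num)
    calc 4 * ((2*t+1) * ((2*t+1).choose t)^2)
        = (2*t+1) * (2 * (2*t+1).choose t)^2 := by ring
      _ = (2*t+1) * (Nat.centralBinom (t+1))^2 := by rw [hcb]
      _ ≤ (3*(t+1)+1) * (Nat.centralBinom (t+1))^2 := Nat.mul_le_mul_right _ (by omega)
      _ ≤ 16^(t+1) := lemA' (t+1)
      _ = 4 * 4^(2*t+1) := by rw [show (16:ℕ) = 4^2 by norm_num, ← Nat.pow_mul]; ring

private lemma count_inter' {S : Type} [Fintype S] [DecidableEq S] (K : Finset S) (b j : ℕ) :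
    ((Finset.univ.powersetCard b).filter (fun A => (A ∩ K).card = j)).card
      ≤ K.card.choose j * (Finset.univ \ K).card.choose (b - j) := by
  rw [← Finset.card_powersetCard, ← Finset.card_powersetCard, ← Finset.card_product]
  apply Finset.card_le_card_of_injOn (fun A => (A ∩ K, A \ K))
  · intro A hA
    simp only [Finset.mem_coe, Finset.mem_filter, Finset.mem_powersetCard_univ] at hA
    obtain ⟨hcard, hj⟩ := hA
    have hsplit : (A ∩ K).card + (A \ K).card = A.card := Finset.card_inter_add_card_sdiff A K
    simp only [Finset.mem_coe, Finset.mem_product, Finset.mem_powersetCard]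
    refine ⟨⟨Finset.inter_subset_right, hj⟩, ?_, ?_⟩
    · intro x hx
      simp only [Finset.mem_sdiff, Finset.mem_univ, true_and] at hx ⊢
      exact hx.2
    · omega
  · intro A₁ h₁ A₂ h₂ h
    have e1 : A₁ ∩ K = A₂ ∩ K := congrArg Prod.fst h
    have e2 : A₁ \ K = A₂ \ K := congrArg Prod.snd h
    calc A₁ = A₁ \ K ∪ A₁ ∩ K := (Finset.sdiff_union_inter A₁ K).symm
      _ = A₂ \ K ∪ A₂ ∩ K := by rw [e1, e2]
      _ = A₂ := Finset.sdiff_union_inter A₂ K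

set_option maxHeartbeats 2000000 in
/-- Fix `β ∈ (0, 1/2)`.  For every `ε > 0` there is `N` such that for all
`n ≥ N`: if `|S| = 2b` with `0 < b`, `2b ≤ n`, and `K ⊆ S` with `|K| ≥ n^(1-β)/2` and
`|S \ K| ≥ n/3`, then the number of subsets `A ⊆ S` with `|A| = b` and
`||A ∩ K| - |K \ A|| ≤ n^(1/2-β)` is at most `ε · C(2b, b)`. -/
theorem statement2 (β : ℝ) (hβ0 : 0 < β) (hβ1 : β < 1 / 2) :
    ∀ ε : ℝ, 0 < ε → ∃ N : ℕ, ∀ n : ℕ, N ≤ n →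
      ∀ (S : Type) [Fintype S] [DecidableEq S], ∀ b : ℕ, 0 < b →
        Fintype.card S = 2 * b → 2 * b ≤ n →
          ∀ K : Finset S, (n : ℝ) ^ (1 - β) / 2 ≤ (K.card : ℝ) →
            (n : ℝ) / 3 ≤ (((Finset.univ : Finset S) \ K).card : ℝ) →
            (((Finset.univ.powersetCard b).filter
                (fun A : Finset S =>
                  |((A ∩ K).card : ℝ) - ((K \ A).card : ℝ)| ≤ (n : ℝ) ^ ((1 : ℝ) / 2 - β))).card : ℝ)
              ≤ ε * ((2 * b).choose b) := by
  intro ε hε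
  refine ⟨max 3 ⌈(10 / ε) ^ (2 / β)⌉₊, ?_⟩
  intro n hn S _ _ b hb hcardS h2bn K hK hSK
  have hn3 : 3 ≤ n := le_trans (le_max_left _ _) hn
  have hx3 : (3:ℝ) ≤ (n:ℝ) := by exact_mod_cast hn3
  have hx0 : (0:ℝ) < (n:ℝ) := by linarith
  have hx1 : (1:ℝ) ≤ (n:ℝ) := by linarith
  have hcx : (10 / ε) ^ (2 / β) ≤ (n:ℝ) := by
    calc (10 / ε) ^ (2 / β) ≤ (⌈(10 / ε) ^ (2 / β)⌉₊ : ℝ) := Nat.le_ceil _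
      _ ≤ ((max 3 ⌈(10 / ε) ^ (2 / β)⌉₊ : ℕ) : ℝ) := by
          exact_mod_cast le_max_right 3 ⌈(10 / ε) ^ (2 / β)⌉₊
      _ ≤ (n:ℝ) := by exact_mod_cast hn
  set k := K.card with hkdef
  set m := (univ \ K).card with hmdef
  have hkuniv : k ≤ 2*b := by
    rw [← hcardS]; exact K.card_le_univ
  have hmeq : m = 2*b - k := by
    rw [hmdef, card_sdiff_of_subset (subset_univ K), card_univ, hcardS]
  have hkm : k + m = 2*b := by omega
  set r : ℝ := (n:ℝ) ^ ((1:ℝ)/2 - β) with hrdef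
  have hr1 : 1 ≤ r := Real.one_le_rpow hx1 (by linarith)
  have hk1 : 1 ≤ k := by
    by_contra h
    have hk0 : (k:ℝ) = 0 := by
      have : k = 0 := by omega
      simp [this]
    have h1 : (1:ℝ) ≤ (n:ℝ)^(1-β) := Real.one_le_rpow hx1 (by linarith)
    rw [hk0] at hK
    linarith
  have hm1 : 1 ≤ m := by
    by_contra h
    have hm0 : (m:ℝ) = 0 := by
      have : m = 0 := by omega
      simp [this]
    rw [hm0] at hSK
    linarith
  -- the window of intersection sizes
  set J := (Finset.range (b+1)).filter (fun j : ℕ => |2*(j:ℝ) - (k:ℝ)| ≤ r) with hJdef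
  set F := ((Finset.univ : Finset S).powersetCard b).filter
      (fun A : Finset S =>
        |((A ∩ K).card : ℝ) - ((K \ A).card : ℝ)| ≤ (n : ℝ) ^ ((1 : ℝ) / 2 - β)) with hFdef
  set M := k.choose (k/2) * m.choose (m/2) with hMdef
  -- Step: F.card ≤ J.card * M
  have hFJ : F ⊆ J.biUnion (fun j => F.filter (fun A => (A ∩ K).card = j)) := by
    intro A hA
    have hA' := hA
    rw [hFdef, mem_filter, Finset.mem_powersetCard_univ] at hA'
    obtain ⟨hAb, hAcond⟩ := hA'
    rw [mem_biUnion]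
    refine ⟨(A ∩ K).card, ?_, by rw [mem_filter]; exact ⟨hA, rfl⟩⟩
    rw [hJdef, mem_filter, mem_range]
    constructor
    · have : (A ∩ K).card ≤ A.card := card_le_card inter_subset_left
      omega
    · have hsplit : (K ∩ A).card + (K \ A).card = k := card_inter_add_card_sdiff K A
      rw [inter_comm] at hsplit
      have hcast : ((A ∩ K).card : ℝ) + ((K \ A).card : ℝ) = (k:ℝ) := by exact_mod_cast hsplit
      have heq : 2*((A ∩ K).card : ℝ) - (k:ℝ) = ((A ∩ K).card : ℝ) - ((K \ A).card : ℝ) := by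
        linarith
      rw [heq]
      exact hAcond
  have hcount : ∀ j ∈ J, (F.filter (fun A => (A ∩ K).card = j)).card ≤ M := by
    intro j hj
    calc (F.filter (fun A => (A ∩ K).card = j)).card
        ≤ (((Finset.univ : Finset S).powersetCard b).filter
            (fun A => (A ∩ K).card = j)).card := by
          apply card_le_card
          intro A hA
          rw [mem_filter] at hA ⊢
          exact ⟨(filter_subset _ _) hA.1, hA.2⟩
      _ ≤ k.choose j * m.choose (b - j) := count_inter' K b j
      _ ≤ M := by
          rw [hMdef]
          exact Nat.mul_le_mul (Nat.choose_le_middle j k) (Nat.choose_le_middle (b-j) m)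
  have hFcard : F.card ≤ J.card * M := by
    calc F.card ≤ (J.biUnion (fun j => F.filter (fun A => (A ∩ K).card = j))).card :=
          card_le_card hFJ
      _ ≤ ∑ j ∈ J, (F.filter (fun A => (A ∩ K).card = j)).card := card_biUnion_le
      _ ≤ ∑ _j ∈ J, M := Finset.sum_le_sum hcount
      _ = J.card * M := by rw [Finset.sum_const, smul_eq_mul]
  -- Step: J.card ≤ r + 1 over ℝ
  have hJcard : (J.card : ℝ) ≤ r + 1 := by
    rcases J.eq_empty_or_nonempty with hJe | hJne
    · rw [hJe]; simp; linarith
    · set j0 := J.min' hJne with hj0def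
      set j1 := J.max' hJne with hj1def
      have hj0 : j0 ∈ J := J.min'_mem hJne
      have hj1 : j1 ∈ J := J.max'_mem hJne
      have h0 := abs_le.mp (mem_filter.mp hj0).2
      have h1 := abs_le.mp (mem_filter.mp hj1).2
      have hsub : J ⊆ Finset.Icc j0 j1 := by
        intro j hj
        rw [Finset.mem_Icc]
        exact ⟨J.min'_le j hj, J.le_max' j hj⟩
      have hle : j0 ≤ j1 := J.min'_le j1 (J.max'_mem hJne)
      have hcard : J.card ≤ j1 + 1 - j0 := by
        calc J.card ≤ (Finset.Icc j0 j1).card := card_le_card hsub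
          _ = j1 + 1 - j0 := Nat.card_Icc j0 j1
      have : (J.card : ℝ) ≤ (j1:ℝ) + 1 - (j0:ℝ) := by
        have := (Nat.cast_le (α := ℝ)).mpr hcard
        rw [Nat.cast_sub (by omega)] at this
        push_cast at this
        linarith
      linarith
  -- real-valued binomial bounds
  set C : ℝ := (((2*b).choose b : ℕ) : ℝ) with hCdef
  have hCeq : ((2*b).choose b : ℕ) = Nat.centralBinom b := rfl
  have hMkm : Real.sqrt ((k:ℝ)*(m:ℝ)) * (M:ℝ) ≤ 4^b := by
    have hnat : (k*m) * M^2 ≤ 16^b := by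
      calc (k*m) * M^2 = (k * (k.choose (k/2))^2) * (m * (m.choose (m/2))^2) := by
            rw [hMdef]; ring
        _ ≤ 4^k * 4^m := Nat.mul_le_mul (lemB' k) (lemB' m)
        _ = 16^b := by
            rw [← pow_add, hkm, show (16:ℕ) = 4^2 by norm_num, ← pow_mul]
    have hreal : ((k:ℝ)*(m:ℝ)) * (M:ℝ)^2 ≤ (16:ℝ)^b := by exact_mod_cast hnat
    have h4 : ((16:ℝ))^b = ((4:ℝ)^b)^2 := by
      rw [show (16:ℝ) = 4^2 by norm_num, ← pow_mul, ← pow_mul, Nat.mul_comm]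
    have hs : Real.sqrt (((k:ℝ)*(m:ℝ)) * (M:ℝ)^2) ≤ Real.sqrt (((4:ℝ)^b)^2) := by
      apply Real.sqrt_le_sqrt; rw [← h4]; exact hreal
    rw [Real.sqrt_mul (by positivity), Real.sqrt_sq (by positivity),
        Real.sqrt_sq (by positivity)] at hs
    exact hs
  have hbC : (4:ℝ)^b ≤ 2 * Real.sqrt (b:ℝ) * C := by
    have hnat : 16^b ≤ 4*b*(Nat.centralBinom b)^2 := lemC' b hb
    have hreal : (16:ℝ)^b ≤ 4*(b:ℝ)*(C:ℝ)^2 := by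
      rw [hCdef, hCeq]; exact_mod_cast hnat
    have h4 : ((16:ℝ))^b = ((4:ℝ)^b)^2 := by
      rw [show (16:ℝ) = 4^2 by norm_num, ← pow_mul, ← pow_mul, Nat.mul_comm]
    have hsq : ((4:ℝ)^b)^2 ≤ (2 * Real.sqrt (b:ℝ) * C)^2 := by
      have : (2 * Real.sqrt (b:ℝ) * C)^2 = 4 * (Real.sqrt (b:ℝ))^2 * C^2 := by ring
      rw [this, Real.sq_sqrt (by positivity), ← h4]
      exact hreal
    have hfin := Real.sqrt_le_sqrt hsq
    rw [Real.sqrt_sq (by positivity), Real.sqrt_sq (by positivity)] at hfin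
    exact hfin
  -- final real arithmetic
  have hkR : (1:ℝ) ≤ (k:ℝ) := by exact_mod_cast hk1
  have hmR : (1:ℝ) ≤ (m:ℝ) := by exact_mod_cast hm1
  have hbR : (1:ℝ) ≤ (b:ℝ) := by exact_mod_cast hb
  have hbn : (b:ℝ) ≤ (n:ℝ) := by
    have : ((2*b:ℕ):ℝ) ≤ (n:ℝ) := by exact_mod_cast h2bn
    push_cast at this; linarith
  have hsqrt_b : Real.sqrt (b:ℝ) ≤ (n:ℝ) ^ ((1:ℝ)/2) := by
    rw [← Real.sqrt_eq_rpow]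
    exact Real.sqrt_le_sqrt hbn
  -- 10 ≤ ε * n^(β/2)
  have hc0 : (0:ℝ) < 10 / ε := by positivity
  have hεx : 10 ≤ ε * (n:ℝ)^(β/2 : ℝ) := by
    have h1 : ((10/ε) ^ (2/β) : ℝ) ^ (β/2 : ℝ) ≤ (n:ℝ) ^ (β/2 : ℝ) :=
      Real.rpow_le_rpow (Real.rpow_nonneg hc0.le _) hcx (by positivity)
    have h2 : ((10/ε) ^ (2/β) : ℝ) ^ (β/2 : ℝ) = 10/ε := by
      rw [← Real.rpow_mul hc0.le, show (2/β)*(β/2) = 1 by field_simp, Real.rpow_one]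
    rw [h2] at h1
    calc (10:ℝ) = ε * (10/ε) := by field_simp
      _ ≤ ε * (n:ℝ)^(β/2 : ℝ) := mul_le_mul_of_nonneg_left h1 hε.le
  -- lower bound on k*m
  have hkm_lower : (n:ℝ)^((2:ℝ)-β)/6 ≤ (k:ℝ)*(m:ℝ) := by
    have h1 : (n:ℝ)^(1-β)/2 * ((n:ℝ)/3) ≤ (k:ℝ)*(m:ℝ) :=
      mul_le_mul hK hSK (by positivity) (by positivity)
    have heq : (n:ℝ)^(1-β)/2 * ((n:ℝ)/3) = (n:ℝ)^((2:ℝ)-β)/6 := by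
      rw [show ((2:ℝ)-β) = (1-β) + 1 by ring, Real.rpow_add hx0, Real.rpow_one]; ring
    linarith [heq ▸ h1]
  have hs2 : Real.sqrt ((n:ℝ)^((2:ℝ)-β)/6) = (n:ℝ)^(1-β/2 : ℝ) / Real.sqrt 6 := by
    rw [Real.sqrt_div (by positivity), Real.sqrt_eq_rpow ((n:ℝ)^((2:ℝ)-β)),
      ← Real.rpow_mul hx0.le, show ((2:ℝ)-β)*(1/2) = 1-β/2 by ring]
  have hs1 : (n:ℝ)^(1-β/2 : ℝ) / Real.sqrt 6 ≤ Real.sqrt ((k:ℝ)*(m:ℝ)) := by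
    rw [← hs2]; exact Real.sqrt_le_sqrt hkm_lower
  have hsqrt6 : Real.sqrt 6 ≤ 2.5 := by
    have h := Real.sqrt_le_sqrt (show (6:ℝ) ≤ 6.25 by norm_num)
    rwa [show (6.25:ℝ) = 2.5^2 by norm_num, Real.sqrt_sq (by norm_num)] at h
  have hsqrt6' : (0:ℝ) < Real.sqrt 6 := Real.sqrt_pos.mpr (by norm_num)
  have hG : (r+1) * (2 * Real.sqrt (b:ℝ)) ≤ ε * Real.sqrt ((k:ℝ)*(m:ℝ)) := by
    have hLHS : (r+1) * (2 * Real.sqrt (b:ℝ)) ≤ 4 * (n:ℝ)^(1-β) := by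
      calc (r+1) * (2 * Real.sqrt (b:ℝ)) ≤ (2*r) * (2*(n:ℝ)^((1:ℝ)/2)) := by
            apply mul_le_mul (by linarith) (by linarith [hsqrt_b]) (by positivity) (by positivity)
        _ = 4 * ((n:ℝ)^((1:ℝ)/2-β) * (n:ℝ)^((1:ℝ)/2)) := by rw [hrdef]; ring
        _ = 4 * (n:ℝ)^(1-β) := by
            rw [← Real.rpow_add hx0, show ((1:ℝ)/2-β)+(1:ℝ)/2 = 1-β by ring]
    have e1 : (n:ℝ)^(1-β/2 : ℝ) = (n:ℝ)^(β/2 : ℝ) * (n:ℝ)^(1-β) := by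
      rw [← Real.rpow_add hx0]; congr 1; ring
    have hy : (0:ℝ) ≤ (n:ℝ)^(1-β) := by positivity
    have hRHS : 4 * (n:ℝ)^(1-β) ≤ ε * Real.sqrt ((k:ℝ)*(m:ℝ)) := by
      have A1 : ε * ((n:ℝ)^(1-β/2 : ℝ) / Real.sqrt 6) ≤ ε * Real.sqrt ((k:ℝ)*(m:ℝ)) :=
        mul_le_mul_of_nonneg_left hs1 hε.le
      have A2 : ε * ((n:ℝ)^(1-β/2 : ℝ) / Real.sqrt 6)
          = (ε * (n:ℝ)^(β/2 : ℝ)) * (n:ℝ)^(1-β) / Real.sqrt 6 := by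
        rw [e1]; ring
      have A3 : 10 * (n:ℝ)^(1-β) / Real.sqrt 6
          ≤ (ε * (n:ℝ)^(β/2 : ℝ)) * (n:ℝ)^(1-β) / Real.sqrt 6 := by
        gcongr
      have A4 : 4 * (n:ℝ)^(1-β) ≤ 10 * (n:ℝ)^(1-β) / Real.sqrt 6 := by
        rw [le_div_iff₀ hsqrt6']
        calc 4 * (n:ℝ)^(1-β) * Real.sqrt 6 ≤ 4 * (n:ℝ)^(1-β) * 2.5 := by
              apply mul_le_mul_of_nonneg_left hsqrt6 (by positivity)
          _ = 10 * (n:ℝ)^(1-β) := by ring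
      rw [A2] at A1
      linarith
    linarith
  -- put everything together
  have hb0R : (0:ℝ) < (b:ℝ) := by linarith
  have hk0R : (0:ℝ) < (k:ℝ) := by linarith
  have hm0R : (0:ℝ) < (m:ℝ) := by linarith
  have hbpos : (0:ℝ) < Real.sqrt (b:ℝ) := Real.sqrt_pos.mpr hb0R
  have hkmpos : (0:ℝ) < Real.sqrt ((k:ℝ)*(m:ℝ)) := Real.sqrt_pos.mpr (mul_pos hk0R hm0R)
  have hMain : (r+1) * (M:ℝ) ≤ ε * C := by
    have hpos : (0:ℝ) < 2 * Real.sqrt (b:ℝ) * Real.sqrt ((k:ℝ)*(m:ℝ)) := by positivity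
    refine le_of_mul_le_mul_right ?_ hpos
    calc (r+1) * (M:ℝ) * (2 * Real.sqrt (b:ℝ) * Real.sqrt ((k:ℝ)*(m:ℝ)))
        = ((r+1) * (2 * Real.sqrt (b:ℝ))) * (Real.sqrt ((k:ℝ)*(m:ℝ)) * (M:ℝ)) := by ring
      _ ≤ (ε * Real.sqrt ((k:ℝ)*(m:ℝ))) * ((4:ℝ)^b) := by
          apply mul_le_mul hG hMkm (by positivity) (by positivity)
      _ ≤ (ε * Real.sqrt ((k:ℝ)*(m:ℝ))) * (2 * Real.sqrt (b:ℝ) * C) := by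
          apply mul_le_mul_of_nonneg_left hbC (by positivity)
      _ = ε * C * (2 * Real.sqrt (b:ℝ) * Real.sqrt ((k:ℝ)*(m:ℝ))) := by ring
  have hM0 : (0:ℝ) ≤ (M:ℝ) := by positivity
  calc (F.card : ℝ) ≤ (J.card : ℝ) * (M:ℝ) := by exact_mod_cast hFcard
    _ ≤ (r+1) * (M:ℝ) := mul_le_mul_of_nonneg_right hJcard hM0
    _ ≤ ε * C := hMain
end

section
/- Let 0 < δ < 1/4 and let G be a δ-excellent expander on a finite vertex set V with |V| = n, and suppose (1/4 + δ/2)·n is an integer. Let T ⊆ V with |T| = (1/2 + δ)·n, and let r be a report function on G with fewer than δn truthful errors with respect to T. Let X, Y ⊆ V be disjoint sets with |X| = |Y| = (1/4 + δ/2)·n, and suppose the number of adjacent pairs (x, y) with x ∈ X and y ∈ Y such that r(x,y) = false or r(y,x) = false is less than δn. Then |(X ∪ Y) \ T| < 6δn and |T \ (X ∪ Y)| < 6δn; in particular the symmetric difference satisfies |(X ∪ Y) Δ T| < 12δn. -/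
set_option maxHeartbeats 800000

/-- Key counting lemma: if `A ⊆ T` is large and `B` avoids `T`, and every edge between `A`
and `B` produces a pair in a small set `P`, then `B` is small. -/
lemma statement3_key (δ : ℝ) (V : Type) [Fintype V] [DecidableEq V]
    (G : SimpleGraph V) [DecidableRel G.Adj] (n : ℕ)
    (hexp : ∀ A B : Finset V, Disjoint A B → δ * n ≤ (A.card : ℝ) → δ * n ≤ (B.card : ℝ) →
      ∃ a ∈ A, ∃ b ∈ B, G.Adj a b)
    (T : Finset V) (P : Finset (V × V)) (hP : (P.card : ℝ) < 2 * δ * n)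
    (A B : Finset V) (hAT : A ⊆ T) (hBT : ∀ b ∈ B, b ∉ T)
    (hA : δ * n ≤ (A.card : ℝ))
    (h : ∀ a ∈ A, ∀ b ∈ B, G.Adj a b → ((a, b) ∈ P ∨ (b, a) ∈ P)) :
    (B.card : ℝ) < 3 * δ * n := by
  classical
  have hB0 : ((B.filter (fun b => ¬ ∃ a ∈ A, G.Adj a b)).card : ℝ) < δ * n := by
    by_contra hcon
    rw [not_lt] at hcon
    have hdisj : Disjoint A (B.filter (fun b => ¬ ∃ a ∈ A, G.Adj a b)) := by
      rw [Finset.disjoint_left]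
      intro x hx hx'
      exact hBT x (Finset.filter_subset _ _ hx') (hAT hx)
    obtain ⟨a, ha, b, hb, hab⟩ := hexp A _ hdisj hA hcon
    exact (Finset.mem_filter.mp hb).2 ⟨a, ha, hab⟩
  have hsplit : (B.filter (fun b => ∃ a ∈ A, G.Adj a b)).card
      + (B.filter (fun b => ¬ ∃ a ∈ A, G.Adj a b)).card = B.card :=
    Finset.card_filter_add_card_filter_not _
  set B₁ := B.filter (fun b => ∃ a ∈ A, G.Adj a b) with hB₁def
  have hinj : B₁.card ≤ P.card := by
    have hne : ∀ b ∈ B₁, b ∉ T := fun b hb => hBT b (Finset.filter_subset _ _ hb)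
    set f : V → V × V := fun b =>
      if h1 : ∃ a, a ∈ A ∧ G.Adj a b ∧ (a, b) ∈ P then (h1.choose, b)
      else if h2 : ∃ a, a ∈ A ∧ G.Adj a b ∧ (b, a) ∈ P then (b, h2.choose)
      else (b, b) with hf
    have hcases : ∀ b ∈ B₁, (∃ a, a ∈ A ∧ G.Adj a b ∧ (a, b) ∈ P)
        ∨ (∃ a, a ∈ A ∧ G.Adj a b ∧ (b, a) ∈ P) := by
      intro b hb
      obtain ⟨a, ha, hab⟩ := (Finset.mem_filter.mp hb).2
      rcases h a ha b (Finset.filter_subset _ _ hb) hab with hp | hp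
      · exact Or.inl ⟨a, ha, hab, hp⟩
      · exact Or.inr ⟨a, ha, hab, hp⟩
    have hprop : ∀ b ∈ B₁, f b ∈ P ∧
        (((f b).1 ∈ T ∧ (f b).2 = b) ∨ ((f b).1 = b ∧ (f b).2 ∈ T)) := by
      intro b hb
      rw [hf]; dsimp only
      split_ifs with h1 h2
      · obtain ⟨haA, -, hmem⟩ := h1.choose_spec
        exact ⟨hmem, Or.inl ⟨hAT haA, rfl⟩⟩
      · obtain ⟨haA, -, hmem⟩ := h2.choose_spec
        exact ⟨hmem, Or.inr ⟨rfl, hAT haA⟩⟩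
      · rcases hcases b hb with hc | hc
        · exact absurd hc h1
        · exact absurd hc h2
    apply Finset.card_le_card_of_injOn f
    · intro b hb; exact (hprop b hb).1
    · intro b hb b' hb' heq
      rcases (hprop b hb).2 with ⟨h1T, h1b⟩ | ⟨h1b, h1T⟩ <;>
        rcases (hprop b' hb').2 with ⟨h2T, h2b⟩ | ⟨h2b, h2T⟩
      · rw [← h1b, heq, h2b]
      · exfalso
        have : b' ∈ T := by rw [← h2b, ← heq]; exact h1T
        exact hne b' hb' this
      · exfalso
        have : b ∈ T := by rw [← h1b, heq]; exact h2T
        exact hne b hb this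
      · rw [← h1b, heq, h2b]
  have h1 : (B₁.card : ℝ) ≤ (P.card : ℝ) := by exact_mod_cast hinj
  have h2 : (B₁.card : ℝ) + ((B.filter (fun b => ¬ ∃ a ∈ A, G.Adj a b)).card : ℝ)
      = (B.card : ℝ) := by exact_mod_cast hsplit
  linarith

/-- Let `0 < δ < 1/4` and let `G` be a `δ`-excellent expander on `V`,
`|V| = n`, with `(1/4 + δ/2)·n` an integer.  Suppose `|T| = (1/2 + δ)·n` and the report
function `r` has fewer than `δn` truthful errors with respect to `T`.  If `X, Y` are disjoint
sets with `|X| = |Y| = (1/4 + δ/2)·n` such that fewer than `δn` adjacent pairs `(x, y)` with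
`x ∈ X`, `y ∈ Y` have `r x y = false` or `r y x = false`, then `|(X ∪ Y) \ T| < 6δn`,
`|T \ (X ∪ Y)| < 6δn`, and `|(X ∪ Y) Δ T| < 12δn`.  (The integrality of `(1/4 + δ/2)·n` is
encoded by the cardinality hypotheses on `X` and `Y`.) -/
theorem statement3 (δ : ℝ) (hδ0 : 0 < δ) (hδ1 : δ < 1 / 4)
    (V : Type) [Fintype V] [DecidableEq V]
    (G : SimpleGraph V) [DecidableRel G.Adj] (n : ℕ) (hn : Fintype.card V = n)
    (hexp : ∀ A B : Finset V, Disjoint A B → δ * n ≤ (A.card : ℝ) → δ * n ≤ (B.card : ℝ) →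
      ∃ a ∈ A, ∃ b ∈ B, G.Adj a b)
    (T : Finset V) (hT : (T.card : ℝ) = (1 / 2 + δ) * n)
    (r : V → V → Bool)
    (hr : ((Finset.univ.filter (fun p : V × V =>
        G.Adj p.1 p.2 ∧ p.1 ∈ T ∧ r p.1 p.2 ≠ decide (p.2 ∈ T))).card : ℝ) < δ * n)
    (X Y : Finset V) (hXY : Disjoint X Y)
    (hX : (X.card : ℝ) = (1 / 4 + δ / 2) * n) (hY : (Y.card : ℝ) = (1 / 4 + δ / 2) * n)
    (hbad : ((Finset.univ.filter (fun p : V × V =>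
        p.1 ∈ X ∧ p.2 ∈ Y ∧ G.Adj p.1 p.2 ∧
          (r p.1 p.2 = false ∨ r p.2 p.1 = false))).card : ℝ) < δ * n) :
    (((X ∪ Y) \ T).card : ℝ) < 6 * δ * n ∧ ((T \ (X ∪ Y)).card : ℝ) < 6 * δ * n ∧
      (((X ∪ Y) \ T ∪ T \ (X ∪ Y)).card : ℝ) < 12 * δ * n := by
  classical
  set E := Finset.univ.filter (fun p : V × V =>
      G.Adj p.1 p.2 ∧ p.1 ∈ T ∧ r p.1 p.2 ≠ decide (p.2 ∈ T)) with hEdef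
  set Bd := Finset.univ.filter (fun p : V × V =>
      p.1 ∈ X ∧ p.2 ∈ Y ∧ G.Adj p.1 p.2 ∧
        (r p.1 p.2 = false ∨ r p.2 p.1 = false)) with hBddef
  -- n > 0
  have hn0 : (0 : ℝ) < n := by
    rcases (Nat.cast_nonneg n : (0:ℝ) ≤ (n:ℝ)).eq_or_lt with h | h
    · exfalso
      rw [← h, mul_zero] at hr
      exact absurd hr (not_lt.mpr (Nat.cast_nonneg _))
    · exact h
  -- the small pair set
  have hP : (((E ∪ Bd).card : ℝ)) < 2 * δ * n := by
    have h1 : (E ∪ Bd).card ≤ E.card + Bd.card := Finset.card_union_le _ _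
    have h2 : ((E ∪ Bd).card : ℝ) ≤ (E.card : ℝ) + (Bd.card : ℝ) := by exact_mod_cast h1
    linarith
  -- membership helpers
  have hEmem : ∀ a b : V, G.Adj a b → a ∈ T → b ∉ T → r a b = true → (a, b) ∈ E := by
    intro a b hab haT hbT hr'
    rw [hEdef, Finset.mem_filter]
    refine ⟨Finset.mem_univ _, hab, haT, ?_⟩
    simp [hr', hbT]
  have hBdmem1 : ∀ a b : V, G.Adj a b → a ∈ X → b ∈ Y → r a b = false → (a, b) ∈ Bd := by
    intro a b hab haX hbY hr'
    rw [hBddef, Finset.mem_filter]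
    exact ⟨Finset.mem_univ _, haX, hbY, hab, Or.inl hr'⟩
  have hBdmem2 : ∀ a b : V, G.Adj a b → a ∈ X → b ∈ Y → r b a = false → (a, b) ∈ Bd := by
    intro a b hab haX hbY hr'
    rw [hBddef, Finset.mem_filter]
    exact ⟨Finset.mem_univ _, haX, hbY, hab, Or.inr hr'⟩
  -- the two key applications
  have hkey1 : δ * n ≤ ((X ∩ T).card : ℝ) → ((Y \ T).card : ℝ) < 3 * δ * n := by
    intro hA
    refine statement3_key δ V G n hexp T (E ∪ Bd) hP (X ∩ T) (Y \ T)
      Finset.inter_subset_right (fun b hb => (Finset.mem_sdiff.mp hb).2) hA ?_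
    intro a ha b hb hab
    have haX : a ∈ X := (Finset.mem_inter.mp ha).1
    have haT : a ∈ T := (Finset.mem_inter.mp ha).2
    have hbY : b ∈ Y := (Finset.mem_sdiff.mp hb).1
    have hbT : b ∉ T := (Finset.mem_sdiff.mp hb).2
    left
    rcases Bool.eq_false_or_eq_true (r a b) with hrab | hrab
    · exact Finset.mem_union_left _ (hEmem a b hab haT hbT hrab)
    · exact Finset.mem_union_right _ (hBdmem1 a b hab haX hbY hrab)
  have hkey2 : δ * n ≤ ((Y ∩ T).card : ℝ) → ((X \ T).card : ℝ) < 3 * δ * n := by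
    intro hA
    refine statement3_key δ V G n hexp T (E ∪ Bd) hP (Y ∩ T) (X \ T)
      Finset.inter_subset_right (fun b hb => (Finset.mem_sdiff.mp hb).2) hA ?_
    intro a ha b hb hab
    have haY : a ∈ Y := (Finset.mem_inter.mp ha).1
    have haT : a ∈ T := (Finset.mem_inter.mp ha).2
    have hbX : b ∈ X := (Finset.mem_sdiff.mp hb).1
    have hbT : b ∉ T := (Finset.mem_sdiff.mp hb).2
    rcases Bool.eq_false_or_eq_true (r a b) with hrab | hrab
    · exact Or.inl (Finset.mem_union_left _ (hEmem a b hab haT hbT hrab))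
    · exact Or.inr (Finset.mem_union_right _ (hBdmem2 b a hab.symm hbX haY hrab))
  -- basic cardinality arithmetic (all over ℝ)
  have hXT : ((X ∩ T).card : ℝ) + ((X \ T).card : ℝ) = (X.card : ℝ) := by
    exact_mod_cast Finset.card_inter_add_card_sdiff X T
  have hYT : ((Y ∩ T).card : ℝ) + ((Y \ T).card : ℝ) = (Y.card : ℝ) := by
    exact_mod_cast Finset.card_inter_add_card_sdiff Y T
  have hdisj1 : Disjoint (X \ T) (Y \ T) :=
    hXY.mono (Finset.sdiff_subset) (Finset.sdiff_subset)
  have hudistrib : (X ∪ Y) \ T = (X \ T) ∪ (Y \ T) := by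
    ext x; simp only [Finset.mem_sdiff, Finset.mem_union]; tauto
  have hScard : (((X ∪ Y) \ T).card : ℝ) = ((X \ T).card : ℝ) + ((Y \ T).card : ℝ) := by
    rw [hudistrib]
    exact_mod_cast Finset.card_union_of_disjoint hdisj1
  have hUcard : (((X ∪ Y)).card : ℝ) = (X.card : ℝ) + (Y.card : ℝ) := by
    exact_mod_cast Finset.card_union_of_disjoint hXY
  -- |(X∪Y)∩T| = |X∩T| + |Y∩T|
  have hIdistrib : (X ∪ Y) ∩ T = (X ∩ T) ∪ (Y ∩ T) := Finset.union_inter_distrib_right X Y T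
  have hIcard : (((X ∪ Y) ∩ T).card : ℝ) = ((X ∩ T).card : ℝ) + ((Y ∩ T).card : ℝ) := by
    rw [hIdistrib]
    exact_mod_cast Finset.card_union_of_disjoint
      (hXY.mono Finset.inter_subset_left Finset.inter_subset_left)
  -- |(X∪Y)∩T| ≥ |X∪Y| + |T| - n
  have hbig : ((X ∪ Y).card : ℝ) + (T.card : ℝ) ≤ (n : ℝ) + (((X ∪ Y) ∩ T).card : ℝ) := by
    have h1 : ((X ∪ Y) ∪ T).card + ((X ∪ Y) ∩ T).card = (X ∪ Y).card + T.card :=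
      Finset.card_union_add_card_inter _ _
    have h2 : ((X ∪ Y) ∪ T).card ≤ n := by rw [← hn]; exact Finset.card_le_univ _
    have h1' : (((X ∪ Y) ∪ T).card : ℝ) + (((X ∪ Y) ∩ T).card : ℝ)
        = ((X ∪ Y).card : ℝ) + (T.card : ℝ) := by exact_mod_cast h1
    have h2' : (((X ∪ Y) ∪ T).card : ℝ) ≤ (n : ℝ) := by exact_mod_cast h2
    linarith
  -- |(X∪Y)\T| + |(X∪Y)∩T| = |X∪Y|, and similarly for T
  have hXYs : (((X ∪ Y) \ T).card : ℝ) + (((X ∪ Y) ∩ T).card : ℝ) = ((X ∪ Y).card : ℝ) := by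
    have := Finset.card_sdiff_add_card_inter (X ∪ Y) T
    exact_mod_cast this
  have hTs : ((T \ (X ∪ Y)).card : ℝ) + ((T ∩ (X ∪ Y)).card : ℝ) = (T.card : ℝ) := by
    have := Finset.card_sdiff_add_card_inter T (X ∪ Y)
    exact_mod_cast this
  have hintcomm : ((T ∩ (X ∪ Y)).card : ℝ) = (((X ∪ Y) ∩ T).card : ℝ) := by
    rw [Finset.inter_comm]
  -- bound |(X∪Y)\T| ≤ n - |T|
  have hcomp : (((X ∪ Y) \ T).card : ℝ) + (T.card : ℝ) ≤ (n : ℝ) := by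
    have h1 : (((X ∪ Y) \ T) ∪ T).card = ((X ∪ Y) \ T).card + T.card :=
      Finset.card_union_of_disjoint Finset.sdiff_disjoint
    have h2 : (((X ∪ Y) \ T) ∪ T).card ≤ n := by rw [← hn]; exact Finset.card_le_univ _
    have := h1 ▸ h2
    exact_mod_cast this
  -- main bound
  have hmain : (((X ∪ Y) \ T).card : ℝ) < 6 * δ * n := by
    rcases le_or_gt (δ * n) ((X ∩ T).card : ℝ) with ha | ha
    · rcases le_or_gt (δ * n) ((Y ∩ T).card : ℝ) with hb | hb
      · -- both large: combine the two key bounds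
        have k1 := hkey1 ha
        have k2 := hkey2 hb
        linarith
      · -- |Y∩T| small, so |X∩T| ≥ δn, giving |Y\T| < 3δn, and then |Y∩T| small forces δ > 1/14
        have k1 := hkey1 ha
        -- |Y| = |Y∩T| + |Y\T| < δn + 3δn
        have hm : ((Y.card : ℝ)) < 4 * δ * n := by linarith
        rw [hY] at hm
        -- hence δ > 1/14 (as (1/4+δ/2)n < 4δn), and |(X∪Y)\T| ≤ n - |T| < 6δn
        nlinarith [hcomp, hT]
    · -- |X∩T| small; then |Y∩T| ≥ δn
      have hb : δ * n ≤ ((Y ∩ T).card : ℝ) := by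
        -- from |(X∪Y)∩T| ≥ 2δn
        have : 2 * δ * (n : ℝ) ≤ (((X ∪ Y) ∩ T).card : ℝ) := by
          nlinarith [hbig, hUcard, hX, hY, hT]
        linarith [hIcard.symm ▸ this, ha]
      have k2 := hkey2 hb
      have hm : ((X.card : ℝ)) < 4 * δ * n := by linarith
      rw [hX] at hm
      nlinarith [hcomp, hT]
  refine ⟨hmain, ?_, ?_⟩
  · -- |T\(X∪Y)| = |(X∪Y)\T| since |T| = |X∪Y|
    have hTeq : ((T \ (X ∪ Y)).card : ℝ) = (((X ∪ Y) \ T).card : ℝ) := by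
      have hsz : (T.card : ℝ) = ((X ∪ Y).card : ℝ) := by
        rw [hT, hUcard, hX, hY]; ring
      linarith [hTs, hXYs, hintcomm]
    linarith
  · have hTeq : ((T \ (X ∪ Y)).card : ℝ) = (((X ∪ Y) \ T).card : ℝ) := by
      have hsz : (T.card : ℝ) = ((X ∪ Y).card : ℝ) := by
        rw [hT, hUcard, hX, hY]; ring
      linarith [hTs, hXYs, hintcomm]
    have hdisj2 : Disjoint ((X ∪ Y) \ T) (T \ (X ∪ Y)) :=
      disjoint_sdiff_sdiff
    have : (((X ∪ Y) \ T ∪ T \ (X ∪ Y)).card : ℝ)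
        = (((X ∪ Y) \ T).card : ℝ) + ((T \ (X ∪ Y)).card : ℝ) := by
      exact_mod_cast Finset.card_union_of_disjoint hdisj2
    linarith
end

section
/- Let 0 < δ < 1/4 and let G be a δ-excellent expander on a finite vertex set V with |V| = n. Let T ⊆ V and let r be a report function on G with fewer than δn truthful errors with respect to T. Let X, Y ⊆ V be disjoint sets such that the number of adjacent pairs (x, y) with x ∈ X and y ∈ Y satisfying r(x,y) = false or r(y,x) = false is less than δn. If |X ∩ T| ≥ δn, then |Y \ T| < 3δn. -/
/-- Let `0 < δ < 1/4` and let `G` be a `δ`-excellent expander on `V`,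
`|V| = n`.  Let `T ⊆ V` and let `r` be a report function with fewer than `δn` truthful
errors with respect to `T`.  Let `X, Y` be disjoint sets such that fewer than `δn` adjacent
pairs `(x, y)` with `x ∈ X`, `y ∈ Y` satisfy `r x y = false` or `r y x = false`.  If
`|X ∩ T| ≥ δn`, then `|Y \ T| < 3δn`. -/
theorem statement5 (δ : ℝ) (hδ0 : 0 < δ) (hδ1 : δ < 1 / 4)
    (V : Type) [Fintype V] [DecidableEq V]
    (G : SimpleGraph V) [DecidableRel G.Adj] (n : ℕ) (hn : Fintype.card V = n)
    (hexp : ∀ A B : Finset V, Disjoint A B → δ * n ≤ (A.card : ℝ) → δ * n ≤ (B.card : ℝ) →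
      ∃ a ∈ A, ∃ b ∈ B, G.Adj a b)
    (T : Finset V) (r : V → V → Bool)
    (hr : ((Finset.univ.filter (fun p : V × V =>
        G.Adj p.1 p.2 ∧ p.1 ∈ T ∧ r p.1 p.2 ≠ decide (p.2 ∈ T))).card : ℝ) < δ * n)
    (X Y : Finset V) (hXY : Disjoint X Y)
    (hbad : ((Finset.univ.filter (fun p : V × V =>
        p.1 ∈ X ∧ p.2 ∈ Y ∧ G.Adj p.1 p.2 ∧
          (r p.1 p.2 = false ∨ r p.2 p.1 = false))).card : ℝ) < δ * n)
    (hXT : δ * n ≤ ((X ∩ T).card : ℝ)) :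
    ((Y \ T).card : ℝ) < 3 * δ * n := by
  classical
  by_contra hcon
  push_neg at hcon
  set A := X ∩ T with hA
  set B := Y \ T with hB
  set P := Finset.univ.filter (fun p : V × V => p.1 ∈ A ∧ p.2 ∈ B ∧ G.Adj p.1 p.2) with hPdef
  have hPsub : P ⊆ (Finset.univ.filter (fun p : V × V =>
        G.Adj p.1 p.2 ∧ p.1 ∈ T ∧ r p.1 p.2 ≠ decide (p.2 ∈ T))) ∪
      (Finset.univ.filter (fun p : V × V =>
        p.1 ∈ X ∧ p.2 ∈ Y ∧ G.Adj p.1 p.2 ∧ (r p.1 p.2 = false ∨ r p.2 p.1 = false))) := by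
    intro p hp
    simp only [hPdef, hA, hB, Finset.mem_filter, Finset.mem_univ, true_and,
      Finset.mem_inter, Finset.mem_sdiff] at hp
    obtain ⟨⟨hpX, hpT⟩, ⟨hpY, hpnT⟩, hadj⟩ := hp
    rcases Bool.eq_false_or_eq_true (r p.1 p.2) with hrb | hrb
    · exact Finset.mem_union_left _ (by
        simp only [Finset.mem_filter, Finset.mem_univ, true_and]
        exact ⟨hadj, hpT, by simp [hrb, hpnT]⟩)
    · exact Finset.mem_union_right _ (by
        simp only [Finset.mem_filter, Finset.mem_univ, true_and]
        exact ⟨hpX, hpY, hadj, Or.inl hrb⟩)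
  have hPcard : (P.card : ℝ) < 2 * δ * n := by
    have h1 := Finset.card_le_card hPsub
    have h2 := Finset.card_union_le (Finset.univ.filter (fun p : V × V =>
        G.Adj p.1 p.2 ∧ p.1 ∈ T ∧ r p.1 p.2 ≠ decide (p.2 ∈ T)))
      (Finset.univ.filter (fun p : V × V =>
        p.1 ∈ X ∧ p.2 ∈ Y ∧ G.Adj p.1 p.2 ∧ (r p.1 p.2 = false ∨ r p.2 p.1 = false)))
    have h3 : (P.card : ℝ) ≤ ((Finset.univ.filter (fun p : V × V =>
        G.Adj p.1 p.2 ∧ p.1 ∈ T ∧ r p.1 p.2 ≠ decide (p.2 ∈ T))).card : ℝ) +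
      ((Finset.univ.filter (fun p : V × V =>
        p.1 ∈ X ∧ p.2 ∈ Y ∧ G.Adj p.1 p.2 ∧
          (r p.1 p.2 = false ∨ r p.2 p.1 = false))).card : ℝ) := by
      exact_mod_cast h1.trans h2
    linarith
  set B0 := B.filter (fun y => ∀ x ∈ A, ¬ G.Adj x y) with hB0def
  have hsndf : ∀ y : V, (if h : ∃ x, x ∈ A ∧ G.Adj x y
      then ((h.choose, y) : V × V) else (y, y)).2 = y := by
    intro y; split <;> rfl
  have hinj : ((B \ B0).card : ℝ) ≤ (P.card : ℝ) := by
    have := Finset.card_le_card_of_injOn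
      (f := fun y : V => if h : ∃ x, x ∈ A ∧ G.Adj x y then ((h.choose, y) : V × V) else (y, y))
      (s := B \ B0) (t := P)
      (by
        intro y hy
        simp only [Finset.mem_coe, hB0def, Finset.mem_sdiff, Finset.mem_filter, not_and] at hy
        obtain ⟨hyB, hyn⟩ := hy
        have hex : ∃ x, x ∈ A ∧ G.Adj x y := by
          by_contra hne
          push_neg at hne
          exact hyn hyB hne
        simp only [Finset.mem_coe, dif_pos hex, hPdef, Finset.mem_filter, Finset.mem_univ, true_and]
        exact ⟨hex.choose_spec.1, hyB, hex.choose_spec.2⟩)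
      (by
        intro a _ b _ hab
        have := congrArg Prod.snd hab
        rwa [hsndf, hsndf] at this)
    exact_mod_cast this
  have hBsplit : B.card = (B \ B0).card + B0.card := by
    rw [Finset.card_sdiff_add_card_eq_card (Finset.filter_subset _ _)]
  have hB0card : δ * n ≤ (B0.card : ℝ) := by
    have : (B.card : ℝ) = ((B \ B0).card : ℝ) + (B0.card : ℝ) := by exact_mod_cast hBsplit
    linarith
  have hAB0 : Disjoint A B0 := by
    have hAX : A ⊆ X := Finset.inter_subset_left
    have hBY : B0 ⊆ Y := (Finset.filter_subset _ _).trans Finset.sdiff_subset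
    exact Finset.disjoint_left.mpr (fun a haA haB0 =>
      Finset.disjoint_left.mp hXY (hAX haA) (hBY haB0))
  obtain ⟨a, haA, b, hbB0, hadj⟩ := hexp A B0 hAB0 hXT hB0card
  simp only [hB0def, Finset.mem_filter] at hbB0
  exact hbB0.2 a haA hadj
end
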